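/- Let A be an m×n real matrix with nonzero rows a_1ᵀ,…,a_mᵀ such that Ax = b is consistent, and let x* be the solution nearest x^k. If row i is chosen with probability ‖a_i‖²/‖A‖_F² and x^{k+1} = x^k + ((b_i - a_iᵀx^k)/‖a_i‖²)·a_i, then E[‖x^{k+1} - x*‖²] ≤ (1 - σ(A,2)²/‖A‖_F²)·‖x^k - x*‖², where σ(A,2) is the largest constant with σ(A,2)·‖x - x*‖ ≤ ‖A(x - x*)‖₂ for all x. -/

import Mathlib

open scoped RealInnerProductSpace BigOperators

theorem kaczmarz_nonuniform_rate {m n : ℕ} (hm : 0 < m)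
    (a : Fin m → EuclideanSpace ℝ (Fin n)) (b : Fin m → ℝ)
    (ha : ∀ i, a i ≠ 0) (xk xstar : EuclideanSpace ℝ (Fin n))
    (hsol : ∀ i, ⟪a i, xstar⟫ = b i)
    (hnear : ∀ y, (∀ i, ⟪a i, y⟫ = b i) → ‖xk - xstar‖ ≤ ‖xk - y‖)
    (σ : ℝ) (hσ0 : 0 ≤ σ)
    (hσ : ∀ x xs : EuclideanSpace ℝ (Fin n), (∀ i, ⟪a i, xs⟫ = b i) →
      (∀ y, (∀ i, ⟪a i, y⟫ = b i) → ‖x - xs‖ ≤ ‖x - y‖) →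
      σ * ‖x - xs‖ ≤ Real.sqrt (∑ i, (⟪a i, x - xs⟫) ^ 2)) :
    ∑ i, (‖a i‖ ^ 2 / ∑ j, ‖a j‖ ^ 2) *
        ‖(xk + ((b i - ⟪a i, xk⟫) / ‖a i‖ ^ 2) • a i) - xstar‖ ^ 2
      ≤ (1 - σ ^ 2 / ∑ j, ‖a j‖ ^ 2) * ‖xk - xstar‖ ^ 2 := by
  set e : EuclideanSpace ℝ (Fin n) := xk - xstar with he
  set F : ℝ := ∑ j, ‖a j‖ ^ 2 with hF
  have hFpos : 0 < F := by
    apply Finset.sum_pos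
    · intro i _
      have := norm_pos_iff.mpr (ha i)
      positivity
    · have : Nonempty (Fin m) := Fin.pos_iff_nonempty.mp hm
      exact Finset.univ_nonempty
  have hS0 : 0 ≤ ∑ i, (⟪a i, e⟫) ^ 2 := by positivity
  have hσe : σ ^ 2 * ‖e‖ ^ 2 ≤ ∑ i, (⟪a i, e⟫) ^ 2 := by
    have h1 := hσ xk xstar hsol hnear
    have h2 : (σ * ‖xk - xstar‖) ^ 2 ≤ (Real.sqrt (∑ i, (⟪a i, xk - xstar⟫) ^ 2)) ^ 2 := by
      apply pow_le_pow_left₀ (by positivity) h1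
    rwa [Real.sq_sqrt (by rw [← he]; exact hS0), mul_pow, ← he] at h2
  have key : ∀ i, ‖(xk + ((b i - ⟪a i, xk⟫) / ‖a i‖ ^ 2) • a i) - xstar‖ ^ 2
      = ‖e‖ ^ 2 - (⟪a i, e⟫) ^ 2 / ‖a i‖ ^ 2 := by
    intro i
    have hai : (0:ℝ) < ‖a i‖ ^ 2 := by
      have := norm_pos_iff.mpr (ha i)
      positivity
    have hb : b i - ⟪a i, xk⟫ = -⟪a i, e⟫ := by
      rw [he, inner_sub_right, ← hsol i]; ring
    have hrw : (xk + ((b i - ⟪a i, xk⟫) / ‖a i‖ ^ 2) • a i) - xstar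
        = e + ((-⟪a i, e⟫) / ‖a i‖ ^ 2) • a i := by
      rw [← hb, he]; abel
    rw [hrw, norm_add_sq_real, real_inner_smul_right, norm_smul, mul_pow,
      Real.norm_eq_abs, sq_abs, real_inner_comm e (a i)]
    field_simp
    ring
  calc ∑ i, (‖a i‖ ^ 2 / F) *
        ‖(xk + ((b i - ⟪a i, xk⟫) / ‖a i‖ ^ 2) • a i) - xstar‖ ^ 2
      = ∑ i, ((‖a i‖ ^ 2 / F) * ‖e‖ ^ 2 - (⟪a i, e⟫) ^ 2 / F) := by
        apply Finset.sum_congr rfl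
        intro i _
        rw [key i]
        have hai : (0:ℝ) < ‖a i‖ ^ 2 := by
          have := norm_pos_iff.mpr (ha i)
          positivity
        have hai' : ‖a i‖ ≠ 0 := norm_ne_zero_iff.mpr (ha i)
        field_simp
    _ = ‖e‖ ^ 2 - (∑ i, (⟪a i, e⟫) ^ 2) / F := by
        rw [Finset.sum_sub_distrib, ← Finset.sum_mul, ← Finset.sum_div, ← Finset.sum_div, ← hF,
          div_self hFpos.ne', one_mul]
    _ ≤ ‖e‖ ^ 2 - (σ ^ 2 * ‖e‖ ^ 2) / F := by
        apply sub_le_sub_left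
        gcongr
    _ = (1 - σ ^ 2 / F) * ‖e‖ ^ 2 := by ring
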